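/- arXiv:2409.01748 — 5 statements merged into one kernel-verified Lean document; each statement's English description precedes it below -/
import Mathlib

section
/- Let S ⊂ ℝ² be a bounded open set, f ∈ L²(S; ℝ³) with zero mean, F(R) = ∫_S f · R (x', 0)ᵀ dx', and let R be a maximizer of F over SO(3). Define a(R) = ∫_S f · R (x₁,0,0)ᵀ dx' and b(R) = ∫_S f · R (0,x₂,0)ᵀ dx'. Then a(R) ≥ 0 and b(R) ≥ 0. -/
open MeasureTheory Matrix

/-- If `R₀` maximizes `F` over `SO(3)`, then
`a(R₀) = ∫_S f · R₀ (x₁,0,0)ᵀ ≥ 0` and `b(R₀) = ∫_S f · R₀ (0,x₂,0)ᵀ ≥ 0`. -/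
theorem stmt1
    (S : Set (Fin 2 → ℝ)) (hSopen : IsOpen S) (hSbdd : Bornology.IsBounded S)
    (f : (Fin 2 → ℝ) → (Fin 3 → ℝ))
    (hfL2 : ∀ i : Fin 3, MemLp (fun x => f x i) 2 (volume.restrict S))
    (hfInt : ∀ i : Fin 3, IntegrableOn (fun x => f x i) S)
    (hmean : ∀ i : Fin 3, ∫ x in S, f x i = 0)
    (hInt : ∀ (i : Fin 3) (j : Fin 2), IntegrableOn (fun x => f x i * x j) S)
    (F : Matrix (Fin 3) (Fin 3) ℝ → ℝ)
    (hF : ∀ A, F A = ∫ x in S, (f x) ⬝ᵥ A.mulVec ![x 0, x 1, 0])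
    (R₀ : Matrix (Fin 3) (Fin 3) ℝ)
    (hR₀ : R₀ᵀ * R₀ = 1 ∧ R₀.det = 1)
    (hmax : ∀ R : Matrix (Fin 3) (Fin 3) ℝ, Rᵀ * R = 1 → R.det = 1 → F R ≤ F R₀) :
    0 ≤ ∫ x in S, (f x) ⬝ᵥ R₀.mulVec ![x 0, 0, 0] ∧
    0 ≤ ∫ x in S, (f x) ⬝ᵥ R₀.mulVec ![0, x 1, 0] := by
  have hIa : IntegrableOn (fun x => (f x) ⬝ᵥ R₀.mulVec ![x 0, 0, 0]) S := by
    have h : (fun x : Fin 2 → ℝ => (f x) ⬝ᵥ R₀.mulVec ![x 0, 0, 0])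
        = fun x => R₀ 0 0 * (f x 0 * x 0) + R₀ 1 0 * (f x 1 * x 0)
            + R₀ 2 0 * (f x 2 * x 0) := by
      funext x
      simp [dotProduct, mulVec, Fin.sum_univ_three]
      ring
    rw [h]
    exact (((hInt 0 0).const_mul _).add ((hInt 1 0).const_mul _)).add
      ((hInt 2 0).const_mul _)
  have hIb : IntegrableOn (fun x => (f x) ⬝ᵥ R₀.mulVec ![0, x 1, 0]) S := by
    have h : (fun x : Fin 2 → ℝ => (f x) ⬝ᵥ R₀.mulVec ![0, x 1, 0])
        = fun x => R₀ 0 1 * (f x 0 * x 1) + R₀ 1 1 * (f x 1 * x 1)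
            + R₀ 2 1 * (f x 2 * x 1) := by
      funext x
      simp [dotProduct, mulVec, Fin.sum_univ_three]
      ring
    rw [h]
    exact (((hInt 0 1).const_mul _).add ((hInt 1 1).const_mul _)).add
      ((hInt 2 1).const_mul _)
  set a := ∫ x in S, (f x) ⬝ᵥ R₀.mulVec ![x 0, 0, 0] with ha
  set b := ∫ x in S, (f x) ⬝ᵥ R₀.mulVec ![0, x 1, 0] with hb
  have hFR : F R₀ = a + b := by
    rw [hF, ha, hb, ← integral_add hIa hIb]
    apply integral_congr_ae
    filter_upwards with x
    simp [dotProduct, mulVec, Fin.sum_univ_three]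
    ring
  -- a generic sign-flip matrix
  have key : ∀ ε₁ ε₂ : ℝ, ε₁ = 1 ∨ ε₁ = -1 → ε₂ = 1 ∨ ε₂ = -1 →
      F (R₀ * diagonal ![ε₁, ε₂, ε₁ * ε₂]) = ε₁ * a + ε₂ * b := by
    intro ε₁ ε₂ h1 h2
    have hε1 : ε₁ * ε₁ = 1 := by rcases h1 with h | h <;> rw [h] <;> norm_num
    have hε2 : ε₂ * ε₂ = 1 := by rcases h2 with h | h <;> rw [h] <;> norm_num
    rw [hF]
    have hpt : ∀ x : Fin 2 → ℝ,
        (f x) ⬝ᵥ (R₀ * diagonal ![ε₁, ε₂, ε₁ * ε₂]).mulVec ![x 0, x 1, 0]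
        = ε₁ * ((f x) ⬝ᵥ R₀.mulVec ![x 0, 0, 0])
          + ε₂ * ((f x) ⬝ᵥ R₀.mulVec ![0, x 1, 0]) := by
      intro x
      simp [dotProduct, mulVec, mul_apply, diagonal, Fin.sum_univ_three]
      ring
    calc (∫ x in S, (f x) ⬝ᵥ (R₀ * diagonal ![ε₁, ε₂, ε₁ * ε₂]).mulVec ![x 0, x 1, 0])
        = ∫ x in S, (ε₁ * ((f x) ⬝ᵥ R₀.mulVec ![x 0, 0, 0])
            + ε₂ * ((f x) ⬝ᵥ R₀.mulVec ![0, x 1, 0])) := by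
          exact integral_congr_ae (Filter.Eventually.of_forall fun x => hpt x)
      _ = ε₁ * a + ε₂ * b := by
          rw [integral_add (hIa.const_mul _) (hIb.const_mul _),
            integral_const_mul, integral_const_mul]
  have so3 : ∀ ε₁ ε₂ : ℝ, ε₁ = 1 ∨ ε₁ = -1 → ε₂ = 1 ∨ ε₂ = -1 →
      (R₀ * diagonal ![ε₁, ε₂, ε₁ * ε₂])ᵀ * (R₀ * diagonal ![ε₁, ε₂, ε₁ * ε₂]) = 1
        ∧ (R₀ * diagonal ![ε₁, ε₂, ε₁ * ε₂]).det = 1 := by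
    intro ε₁ ε₂ h1 h2
    have hε1 : ε₁ * ε₁ = 1 := by rcases h1 with h | h <;> rw [h] <;> norm_num
    have hε2 : ε₂ * ε₂ = 1 := by rcases h2 with h | h <;> rw [h] <;> norm_num
    have hDD : diagonal ![ε₁, ε₂, ε₁ * ε₂] * diagonal ![ε₁, ε₂, ε₁ * ε₂]
        = (1 : Matrix (Fin 3) (Fin 3) ℝ) := by
      rw [diagonal_mul_diagonal]
      have h : (fun i => ![ε₁, ε₂, ε₁ * ε₂] i * ![ε₁, ε₂, ε₁ * ε₂] i) = (1 : Fin 3 → ℝ) := by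
        funext i
        fin_cases i <;> simp [hε1, hε2] <;> nlinarith [hε1, hε2]
      rw [h]; exact diagonal_one
    constructor
    · rw [transpose_mul, diagonal_transpose, mul_assoc, ← mul_assoc R₀ᵀ R₀,
        hR₀.1, one_mul, hDD]
    · rw [det_mul, hR₀.2, one_mul, det_diagonal]
      simp [Fin.prod_univ_three]
      nlinarith [hε1, hε2]
  have k1 := key (-1) 1 (Or.inr rfl) (Or.inl rfl)
  have s1 := so3 (-1) 1 (Or.inr rfl) (Or.inl rfl)
  have m1 := hmax _ s1.1 s1.2
  have k2 := key 1 (-1) (Or.inl rfl) (Or.inr rfl)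
  have s2 := so3 1 (-1) (Or.inl rfl) (Or.inr rfl)
  have m2 := hmax _ s2.1 s2.2
  rw [k1, hFR] at m1
  rw [k2, hFR] at m2
  constructor <;> linarith
end

section
/- The sigmoid function σ(x) = 1/(1+e^{−x}) is discriminatory on a compact set K ⊂ ℝ²: if μ is a signed finite regular Borel measure on K such that ∫_K σ(yᵀx + θ) dμ(x) = 0 for all y ∈ ℝ² and all θ ∈ ℝ, then μ = 0. -/
open MeasureTheory Matrix Filter Topology
open scoped NNReal ENNReal

section Aux

variable {K : Set (Fin 2 → ℝ)}

private lemma cont_dot (y : Fin 2 → ℝ) : Continuous fun x : Fin 2 → ℝ => y ⬝ᵥ x := by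
  unfold dotProduct
  exact continuous_finset_sum _ fun i _ => continuous_const.mul (continuous_apply i)

private lemma denom_pos {ε t : ℝ} (hε : 0 ≤ ε) : 0 < 1 + ε * Real.exp t := by
  have := Real.exp_pos t
  nlinarith

/-- From the vanishing of the sigmoid integrals, all exponential moments agree. -/
private lemma exp_integral_eq
    (hK : IsCompact K)
    (P N : Measure (Fin 2 → ℝ)) [IsFiniteMeasure P] [IsFiniteMeasure N]
    (hP : P Kᶜ = 0) (hN : N Kᶜ = 0)
    (hvanish : ∀ (y : Fin 2 → ℝ) (θ : ℝ),
      (∫ x, 1 / (1 + Real.exp (-(y ⬝ᵥ x + θ))) ∂P)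
        - (∫ x, 1 / (1 + Real.exp (-(y ⬝ᵥ x + θ))) ∂N) = 0)
    (y : Fin 2 → ℝ) :
    ∫ x, Real.exp (y ⬝ᵥ x) ∂P = ∫ x, Real.exp (y ⬝ᵥ x) ∂N := by
  set e : (Fin 2 → ℝ) → ℝ := fun x => Real.exp (y ⬝ᵥ x) with he
  have cont_e : Continuous e := Real.continuous_exp.comp (cont_dot y)
  set f : ℝ → (Fin 2 → ℝ) → ℝ := fun ε x => 1 / (1 + ε * e x) with hf
  -- continuity of f ε
  have cont_f : ∀ ε : ℝ, 0 ≤ ε → Continuous (f ε) := by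
    intro ε hε
    exact continuous_const.div (continuous_const.add (continuous_const.mul cont_e))
      (fun x => (denom_pos hε).ne')
  have f_bound : ∀ ε : ℝ, 0 ≤ ε → ∀ x, ‖f ε x‖ ≤ 1 := by
    intro ε hε x
    have h1 : 0 < 1 + ε * e x := denom_pos hε
    rw [Real.norm_eq_abs, abs_div]
    rw [abs_of_nonneg (by norm_num : (0:ℝ) ≤ 1), abs_of_pos h1]
    rw [div_le_one h1]
    nlinarith [Real.exp_pos (y ⬝ᵥ x), mul_nonneg hε (Real.exp_pos (y ⬝ᵥ x)).le]
  have int_f : ∀ (Q : Measure (Fin 2 → ℝ)) [IsFiniteMeasure Q], ∀ ε : ℝ, 0 ≤ ε →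
      Integrable (f ε) Q := by
    intro Q _ ε hε
    exact (integrable_const (1:ℝ)).mono' (cont_f ε hε).aestronglyMeasurable
      (Filter.Eventually.of_forall (f_bound ε hε))
  -- the vanishing in the ε variable
  have hG : ∀ ε : ℝ, 0 < ε → (∫ x, f ε x ∂P) - (∫ x, f ε x ∂N) = 0 := by
    intro ε hε
    have h := hvanish (-y) (-Real.log ε)
    have heq : (fun x => 1 / (1 + Real.exp (-((-y) ⬝ᵥ x + -Real.log ε)))) = f ε := by
      funext x
      rw [hf, he]
      rw [neg_dotProduct]
      have h2 : -(-(y ⬝ᵥ x) + -Real.log ε) = y ⬝ᵥ x + Real.log ε := by ring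
      rw [h2, Real.exp_add, Real.exp_log hε, mul_comm]
    rw [heq] at h
    exact h
  -- sequence εₙ = 1/(n+1)
  have hεpos : ∀ n : ℕ, (0:ℝ) < 1 / (n + 1) := fun n => by positivity
  have hεlim : Tendsto (fun n : ℕ => (1:ℝ) / (n + 1)) atTop (𝓝 0) :=
    tendsto_one_div_add_atTop_nhds_zero_nat
  -- Step 1: total masses agree
  have tend1 : ∀ (Q : Measure (Fin 2 → ℝ)) [IsFiniteMeasure Q],
      Tendsto (fun n : ℕ => ∫ x, f (1/(n+1)) x ∂Q) atTop (𝓝 (∫ _x, (1:ℝ) ∂Q)) := by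
    intro Q _
    apply tendsto_integral_of_dominated_convergence (fun _ => (1:ℝ))
    · exact fun n => ((cont_f _ (hεpos n).le).aestronglyMeasurable)
    · exact integrable_const 1
    · exact fun n => Filter.Eventually.of_forall (f_bound _ (hεpos n).le)
    · refine Filter.Eventually.of_forall fun x => ?_
      have hc : ContinuousAt (fun ε : ℝ => 1 / (1 + ε * e x)) 0 := by
        apply ContinuousAt.div continuousAt_const
        · exact (continuous_const.add (continuous_id.mul continuous_const)).continuousAt
        · norm_num
      have := hc.tendsto.comp hεlim
      simpa [hf, Function.comp_def, one_div] using this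
  have mass_eq : (∫ _x, (1:ℝ) ∂P) = ∫ _x, (1:ℝ) ∂N := by
    have h1 : Tendsto (fun n : ℕ => (∫ x, f (1/(n+1)) x ∂P) - ∫ x, f (1/(n+1)) x ∂N)
        atTop (𝓝 ((∫ _x, (1:ℝ) ∂P) - ∫ _x, (1:ℝ) ∂N)) := (tend1 P).sub (tend1 N)
    have h2 : (fun n : ℕ => (∫ x, f (1/(n+1)) x ∂P) - ∫ x, f (1/(n+1)) x ∂N)
        = fun _ => (0:ℝ) := funext fun n => hG _ (hεpos n)
    rw [h2] at h1
    have := tendsto_nhds_unique h1 tendsto_const_nhds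
    linarith
  -- Step 2: the functions h ε
  set g : ℝ → (Fin 2 → ℝ) → ℝ := fun ε x => e x / (1 + ε * e x) with hg
  have g_eq : ∀ ε : ℝ, 0 < ε → ∀ x, g ε x = (1 - f ε x) / ε := by
    intro ε hε x
    have h1 : (0:ℝ) < 1 + ε * e x := denom_pos hε.le
    rw [hg, hf]
    field_simp
    rw [eq_sub_iff_add_eq, ← add_div, add_comm _ (1:ℝ), div_self (by rw [mul_comm]; exact h1.ne')]
  have cont_g : ∀ ε : ℝ, 0 ≤ ε → Continuous (g ε) :=
    fun ε hε => cont_e.div (continuous_const.add (continuous_const.mul cont_e))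
      (fun x => (denom_pos hε).ne')
  -- bound for g on K
  obtain ⟨C, hC⟩ : ∃ C : ℝ, ∀ z ∈ e '' K, z ≤ C := by
    rcases (hK.image cont_e).bddAbove with ⟨C, hC⟩
    exact ⟨C, fun z hz => hC hz⟩
  have haeK : ∀ (Q : Measure (Fin 2 → ℝ)), Q Kᶜ = 0 → ∀ᵐ x ∂Q, x ∈ K := by
    intro Q hQ
    rw [ae_iff]
    exact hQ
  have g_le : ∀ ε : ℝ, 0 ≤ ε → ∀ x ∈ K, ‖g ε x‖ ≤ C := by
    intro ε hε x hx
    have h1 : (0:ℝ) < 1 + ε * e x := denom_pos hε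
    have h2 : 0 < e x := Real.exp_pos _
    have h3 : e x ≤ C := hC _ ⟨x, hx, rfl⟩
    rw [hg, Real.norm_eq_abs, abs_of_nonneg (by positivity)]
    have h4 : e x / (1 + ε * e x) ≤ e x := by
      rw [div_le_iff₀ h1]
      nlinarith [mul_nonneg hε (mul_pos h2 h2).le]
    exact h4.trans h3
  have int_g : ∀ (Q : Measure (Fin 2 → ℝ)) [IsFiniteMeasure Q], Q Kᶜ = 0 → ∀ ε : ℝ, 0 ≤ ε →
      Integrable (g ε) Q := by
    intro Q _ hQ ε hε
    refine (integrable_const C).mono' (cont_g ε hε).aestronglyMeasurable ?_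
    filter_upwards [haeK Q hQ] with x hx
    exact g_le ε hε x hx
  -- vanishing for g
  have hH : ∀ ε : ℝ, 0 < ε → (∫ x, g ε x ∂P) - (∫ x, g ε x ∂N) = 0 := by
    intro ε hε
    have key : ∀ (Q : Measure (Fin 2 → ℝ)) [IsFiniteMeasure Q],
        (∫ x, g ε x ∂Q) = ((∫ _x, (1:ℝ) ∂Q) - ∫ x, f ε x ∂Q) / ε := by
      intro Q _
      have h1 : (fun x => g ε x) = fun x => (1 - f ε x) / ε := funext (g_eq ε hε)
      rw [h1]
      rw [integral_div, integral_sub (integrable_const 1) (int_f Q ε hε.le)]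
    rw [key P, key N, div_sub_div_same]
    have h5 : ((∫ _x, (1:ℝ) ∂P) - ∫ x, f ε x ∂P) - ((∫ _x, (1:ℝ) ∂N) - ∫ x, f ε x ∂N) = 0 := by
      rw [mass_eq]
      have h6 := hG ε hε
      linarith
    rw [h5, zero_div]
  -- dominated convergence for g
  have tend2 : ∀ (Q : Measure (Fin 2 → ℝ)) [IsFiniteMeasure Q], Q Kᶜ = 0 →
      Tendsto (fun n : ℕ => ∫ x, g (1/(n+1)) x ∂Q) atTop (𝓝 (∫ x, e x ∂Q)) := by
    intro Q _ hQ
    apply tendsto_integral_of_dominated_convergence (fun _ => C)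
    · exact fun n => ((cont_g _ (hεpos n).le).aestronglyMeasurable)
    · exact integrable_const C
    · intro n
      filter_upwards [haeK Q hQ] with x hx
      exact g_le _ (hεpos n).le x hx
    · refine Filter.Eventually.of_forall fun x => ?_
      have hc : ContinuousAt (fun ε : ℝ => e x / (1 + ε * e x)) 0 := by
        apply ContinuousAt.div continuousAt_const
        · exact (continuous_const.add (continuous_id.mul continuous_const)).continuousAt
        · norm_num
      have := hc.tendsto.comp hεlim
      simpa [hg, Function.comp_def, one_div] using this
  have h1 : Tendsto (fun n : ℕ => (∫ x, g (1/(n+1)) x ∂P) - ∫ x, g (1/(n+1)) x ∂N)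
      atTop (𝓝 ((∫ x, e x ∂P) - ∫ x, e x ∂N)) := (tend2 P hP).sub (tend2 N hN)
  have h2 : (fun n : ℕ => (∫ x, g (1/(n+1)) x ∂P) - ∫ x, g (1/(n+1)) x ∂N)
      = fun _ => (0:ℝ) := funext fun n => hH _ (hεpos n)
  rw [h2] at h1
  have := tendsto_nhds_unique h1 tendsto_const_nhds
  linarith

/-- Stone–Weierstrass step: finite measures supported in a compact set with equal
exponential moments are equal. -/
private lemma measure_eq_of_exp
    (hK : IsCompact K)
    (P N : Measure (Fin 2 → ℝ)) [IsFiniteMeasure P] [IsFiniteMeasure N]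
    (hP : P Kᶜ = 0) (hN : N Kᶜ = 0)
    (hexp : ∀ y : Fin 2 → ℝ, ∫ x, Real.exp (y ⬝ᵥ x) ∂P = ∫ x, Real.exp (y ⬝ᵥ x) ∂N) :
    P = N := by
  have hKm : MeasurableSet K := hK.isClosed.measurableSet
  haveI : CompactSpace K := isCompact_iff_compactSpace.mp hK
  set P' : Measure K := P.comap Subtype.val with hP'def
  set N' : Measure K := N.comap Subtype.val with hN'def
  have hemb : MeasurableEmbedding (Subtype.val : K → (Fin 2 → ℝ)) :=
    MeasurableEmbedding.subtype_coe hKm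
  have haeP : ∀ᵐ x ∂P, x ∈ K := by rw [ae_iff]; exact hP
  have haeN : ∀ᵐ x ∂N, x ∈ K := by rw [ae_iff]; exact hN
  have hPmap : Measure.map Subtype.val P' = P := by
    rw [hP'def, map_comap_subtype_coe hKm, Measure.restrict_eq_self_of_ae_mem haeP]
  have hNmap : Measure.map Subtype.val N' = N := by
    rw [hN'def, map_comap_subtype_coe hKm, Measure.restrict_eq_self_of_ae_mem haeN]
  haveI : IsFiniteMeasure P' := by
    constructor
    rw [hemb.comap_apply]
    exact lt_of_le_of_lt (measure_mono (Set.subset_univ _)) (measure_lt_top P _)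
  haveI : IsFiniteMeasure N' := by
    constructor
    rw [hemb.comap_apply]
    exact lt_of_le_of_lt (measure_mono (Set.subset_univ _)) (measure_lt_top N _)
  -- reduce to equality of the comap measures
  suffices h : P' = N' by rw [← hPmap, ← hNmap, h]
  -- integrability of continuous maps on the compact subtype
  have hint : ∀ (Q : Measure K) [IsFiniteMeasure Q], ∀ u : C(K, ℝ), Integrable u Q := by
    intro Q _ u
    have := (BoundedContinuousFunction.mkOfCompact u).integrable Q
    exact this
  -- the exponential continuous maps
  set eC : (Fin 2 → ℝ) → C(K, ℝ) :=
    fun y => ⟨fun ω => Real.exp (y ⬝ᵥ (ω : Fin 2 → ℝ)),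
      (Real.continuous_exp.comp (cont_dot y)).comp continuous_subtype_val⟩ with heC
  have hint_eC : ∀ (Q : Measure (Fin 2 → ℝ)), Q Kᶜ = 0 → ∀ y,
      ∫ ω : K, (eC y) ω ∂(Q.comap Subtype.val) = ∫ x, Real.exp (y ⬝ᵥ x) ∂Q := by
    intro Q hQ y
    have h1 := integral_subtype_comap hKm (fun x => Real.exp (y ⬝ᵥ x)) (μ := Q)
    have haeQ : ∀ᵐ x ∂Q, x ∈ K := by rw [ae_iff]; exact hQ
    rw [Measure.restrict_eq_self_of_ae_mem haeQ] at h1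
    exact h1
  -- the span of exponentials is a subalgebra
  set S : Set C(K, ℝ) := Set.range eC with hS
  set V : Submodule ℝ C(K, ℝ) := Submodule.span ℝ S with hV
  have hone : (1 : C(K, ℝ)) ∈ V := by
    apply Submodule.subset_span
    refine ⟨0, ?_⟩
    ext ω
    simp [heC]
  have hmulS : ∀ a ∈ S, ∀ b ∈ S, a * b ∈ S := by
    rintro _ ⟨y₁, rfl⟩ _ ⟨y₂, rfl⟩
    refine ⟨y₁ + y₂, ?_⟩
    ext ω
    simp only [heC, ContinuousMap.mul_apply, ContinuousMap.coe_mk]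
    rw [add_dotProduct, Real.exp_add]
  have hmul : ∀ a b : C(K, ℝ), a ∈ V → b ∈ V → a * b ∈ V := by
    intro a b ha hb
    have h1 : a * b ∈ V * V := Submodule.mul_mem_mul ha hb
    rw [hV, Submodule.span_mul_span] at h1
    refine Submodule.span_le.mpr ?_ h1
    rintro _ ⟨u, hu, v, hv, rfl⟩
    exact Submodule.subset_span (hmulS u hu v hv)
  set A : Subalgebra ℝ C(K, ℝ) := V.toSubalgebra hone hmul with hA
  have hsep : A.SeparatesPoints := by
    intro ω₁ ω₂ hne
    have hvne : (ω₁ : Fin 2 → ℝ) ≠ (ω₂ : Fin 2 → ℝ) := Subtype.coe_injective.ne hne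
    obtain ⟨i, hi⟩ := Function.ne_iff.mp hvne
    refine ⟨eC (Pi.single i 1), ⟨eC (Pi.single i 1), Submodule.subset_span ⟨_, rfl⟩, rfl⟩, ?_⟩
    simp only [heC, ContinuousMap.coe_mk]
    rw [single_dotProduct, single_dotProduct]
    simp only [one_mul]
    exact fun h => hi (Real.exp_injective h)
  -- integrals agree on the subalgebra
  have hVint : ∀ u : C(K, ℝ), u ∈ V → ∫ ω, u ω ∂P' = ∫ ω, u ω ∂N' := by
    intro u hu
    induction hu using Submodule.span_induction with
    | mem v hv =>
      obtain ⟨y, rfl⟩ := hv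
      rw [hP'def, hN'def, hint_eC P hP y, hint_eC N hN y]
      exact hexp y
    | zero => simp
    | add v w _ _ hv hw =>
      have h1 : ∫ ω, (v + w) ω ∂P' = (∫ ω, v ω ∂P') + ∫ ω, w ω ∂P' := by
        simp only [ContinuousMap.add_apply]
        exact integral_add (hint P' v) (hint P' w)
      have h2 : ∫ ω, (v + w) ω ∂N' = (∫ ω, v ω ∂N') + ∫ ω, w ω ∂N' := by
        simp only [ContinuousMap.add_apply]
        exact integral_add (hint N' v) (hint N' w)
      rw [h1, h2, hv, hw]
    | smul c v _ hv =>
      have h1 : ∫ ω, (c • v) ω ∂P' = c • ∫ ω, v ω ∂P' := by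
        simp only [ContinuousMap.smul_apply]
        exact integral_smul c _
      have h2 : ∫ ω, (c • v) ω ∂N' = c • ∫ ω, v ω ∂N' := by
        simp only [ContinuousMap.smul_apply]
        exact integral_smul c _
      rw [h1, h2, hv]
  -- by Stone–Weierstrass, integrals agree on all continuous functions
  have hall : ∀ u : C(K, ℝ), ∫ ω, u ω ∂P' = ∫ ω, u ω ∂N' := by
    intro u
    set M : ℝ := (P' Set.univ).toReal + (N' Set.univ).toReal with hM
    have hM0 : 0 ≤ M := by positivity
    set D : ℝ := (∫ ω, u ω ∂P') - ∫ ω, u ω ∂N' with hD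
    have key : ∀ n : ℕ, |D| ≤ (1/(n+1)) * M := by
      intro n
      obtain ⟨w, hw⟩ := ContinuousMap.exists_mem_subalgebra_near_continuousMap_of_separatesPoints
        A hsep u (1/(n+1)) (by positivity)
      have hwV : (w : C(K, ℝ)) ∈ V := w.2
      have hwint := hVint _ hwV
      have hdiff : ∀ ω : K, ‖u ω - (w : C(K, ℝ)) ω‖ ≤ 1/(n+1) := by
        intro ω
        have := ContinuousMap.norm_coe_le_norm ((w : C(K, ℝ)) - u) ω
        have h2 : ‖((w : C(K, ℝ)) - u) ω‖ = ‖u ω - (w : C(K, ℝ)) ω‖ := by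
          rw [ContinuousMap.sub_apply, norm_sub_rev]
        rw [h2] at this
        exact this.trans hw.le
      have hDeq : D = (∫ ω, (u ω - (w : C(K, ℝ)) ω) ∂P')
          - ∫ ω, (u ω - (w : C(K, ℝ)) ω) ∂N' := by
        rw [integral_sub (hint P' u) (hint P' _), integral_sub (hint N' u) (hint N' _), hD]
        rw [← hwint]
        ring
      have hb1 : ‖∫ ω, (u ω - (w : C(K, ℝ)) ω) ∂P'‖ ≤ (1/(n+1)) * (P' Set.univ).toReal :=
        norm_integral_le_of_norm_le_const (Filter.Eventually.of_forall hdiff)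
      have hb2 : ‖∫ ω, (u ω - (w : C(K, ℝ)) ω) ∂N'‖ ≤ (1/(n+1)) * (N' Set.univ).toReal :=
        norm_integral_le_of_norm_le_const (Filter.Eventually.of_forall hdiff)
      calc |D| ≤ ‖∫ ω, (u ω - (w : C(K, ℝ)) ω) ∂P'‖
            + ‖∫ ω, (u ω - (w : C(K, ℝ)) ω) ∂N'‖ := by
            rw [hDeq]; exact abs_sub _ _
        _ ≤ (1/(n+1)) * (P' Set.univ).toReal + (1/(n+1)) * (N' Set.univ).toReal :=
            add_le_add hb1 hb2
        _ = (1/(n+1)) * M := by rw [hM]; ring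
    have hlim : Tendsto (fun n : ℕ => (1/(n+1:ℝ)) * M) atTop (𝓝 0) := by
      have := tendsto_one_div_add_atTop_nhds_zero_nat.mul_const M
      simpa using this
    have habs : |D| ≤ 0 :=
      le_of_tendsto_of_tendsto tendsto_const_nhds hlim
        (Filter.Eventually.of_forall key)
    have : D = 0 := abs_eq_zero.mp (le_antisymm habs (abs_nonneg _))
    rw [hD] at this
    linarith
  -- conclude via the lintegral characterization
  apply ext_of_forall_lintegral_eq_of_IsFiniteMeasure
  intro u
  have hcont : Continuous fun ω : K => (u ω : ℝ) :=
    NNReal.continuous_coe.comp u.continuous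
  set uC : C(K, ℝ) := ⟨fun ω => (u ω : ℝ), hcont⟩ with huC
  have hintP : Integrable (fun ω : K => ((u ω : ℝ≥0) : ℝ)) P' := hint P' uC
  have hintN : Integrable (fun ω : K => ((u ω : ℝ≥0) : ℝ)) N' := hint N' uC
  have h1 : ∫⁻ ω, u ω ∂P' = ENNReal.ofReal (∫ ω, uC ω ∂P') := by
    rw [lintegral_coe_eq_integral _ hintP]
    rfl
  have h2 : ∫⁻ ω, u ω ∂N' = ENNReal.ofReal (∫ ω, uC ω ∂N') := by
    rw [lintegral_coe_eq_integral _ hintN]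
    rfl
  rw [h1, h2, hall uC]

end Aux

/-- The sigmoid `σ(t) = 1/(1+e^{−t})` is discriminatory on a
compact set `K ⊂ ℝ²`: if `μ` is a finite signed Borel measure supported in `K`
with `∫_K σ(yᵀx + θ) dμ(x) = 0` for all `y ∈ ℝ²`, `θ ∈ ℝ`, then `μ = 0`. -/
theorem stmt5
    (K : Set (Fin 2 → ℝ)) (hK : IsCompact K)
    (μ : MeasureTheory.SignedMeasure (Fin 2 → ℝ))
    (hsupp_pos : μ.toJordanDecomposition.posPart Kᶜ = 0)
    (hsupp_neg : μ.toJordanDecomposition.negPart Kᶜ = 0)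
    (σ : ℝ → ℝ) (hσ : ∀ t, σ t = 1 / (1 + Real.exp (-t)))
    (hvanish : ∀ (y : Fin 2 → ℝ) (θ : ℝ),
      (∫ x, σ (y ⬝ᵥ x + θ) ∂μ.toJordanDecomposition.posPart)
        - (∫ x, σ (y ⬝ᵥ x + θ) ∂μ.toJordanDecomposition.negPart) = 0) :
    μ = 0 := by
  set P := μ.toJordanDecomposition.posPart with hPdef
  set N := μ.toJordanDecomposition.negPart with hNdef
  simp only [hσ] at hvanish
  have hPN : P = N :=
    measure_eq_of_exp hK P N hsupp_pos hsupp_neg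
      (exp_integral_eq hK P N hsupp_pos hsupp_neg hvanish)
  obtain ⟨s, hsm, hs1, hs2⟩ := μ.toJordanDecomposition.mutuallySingular
  have hP0 : P = 0 := by
    have huniv : P Set.univ = 0 := by
      have : P Set.univ = P s + P sᶜ := by
        rw [← measure_union (disjoint_compl_right) hsm.compl, Set.union_compl_self]
      rw [this, hs1, hPN, hs2]
      simp
    exact Measure.measure_univ_eq_zero.mp huniv
  have hN0 : N = 0 := by rw [← hPN]; exact hP0
  have hts : ∀ (Q : Measure (Fin 2 → ℝ)) [IsFiniteMeasure Q], Q = 0 →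
      Q.toSignedMeasure = 0 := by
    intro Q _ hQ
    subst hQ
    exact Measure.toSignedMeasure_zero
  have hjd : μ.toJordanDecomposition.toSignedMeasure = μ :=
    μ.toSignedMeasure_toJordanDecomposition
  rw [← hjd]
  show P.toSignedMeasure - N.toSignedMeasure = 0
  rw [hts P hP0, hts N hN0, sub_zero]
end

section
/- Let S ⊂ ℝ² be a bounded open set and let A_det = {v ∈ W^{2,2}(S) : det(∇²v) = 0 a.e. in S}. Then the linear span of A_det is dense in L²(S). -/
open MeasureTheory

namespace Stmt8Aux


noncomputable def lform (a : Fin 2 → ℝ) : (Fin 2 → ℝ) →L[ℝ] ℝ :=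
  a 0 • ContinuousLinearMap.proj 0 + a 1 • ContinuousLinearMap.proj 1

lemma lform_apply (a x : Fin 2 → ℝ) : lform a x = a 0 * x 0 + a 1 * x 1 := by
  simp [lform, smul_eq_mul]

lemma lform_single (a : Fin 2 → ℝ) (j : Fin 2) : lform a (Pi.single j 1) = a j := by
  fin_cases j <;> simp [lform_apply, Pi.single_apply]

noncomputable def expf (a : Fin 2 → ℝ) : (Fin 2 → ℝ) → ℝ :=
  fun x => Real.exp (a 0 * x 0 + a 1 * x 1)

lemma expf_eq (a : Fin 2 → ℝ) : expf a = fun x => Real.exp (lform a x) := by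
  funext x; rw [lform_apply]; rfl

lemma contDiff_expf (a : Fin 2 → ℝ) : ContDiff ℝ 2 (expf a) := by
  rw [expf_eq]
  exact (Real.contDiff_exp.of_le le_top).comp (lform a).contDiff

lemma hasFDeriv_expf (a x : Fin 2 → ℝ) :
    HasFDerivAt (expf a) (Real.exp (lform a x) • (lform a)) x := by
  rw [expf_eq]; exact ((lform a).hasFDerivAt).exp

lemma fderiv_expf_single (a : Fin 2 → ℝ) (j : Fin 2) :
    (fun z => fderiv ℝ (expf a) z (Pi.single j 1)) =
      fun z => Real.exp (lform a z) * a j := by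
  funext z
  rw [(hasFDeriv_expf a z).fderiv]
  simp [lform_single, smul_eq_mul]

lemma hessian_entry (a : Fin 2 → ℝ) (i j : Fin 2) (x : Fin 2 → ℝ) :
    fderiv ℝ (fun z => fderiv ℝ (expf a) z (Pi.single j 1)) x (Pi.single i 1)
      = a j * (Real.exp (lform a x) * a i) := by
  rw [fderiv_expf_single]
  have h : HasFDerivAt (fun z => Real.exp (lform a z) * a j)
      (a j • (Real.exp (lform a x) • lform a)) x :=
    ((lform a).hasFDerivAt).exp.mul_const (a j)
  rw [h.fderiv]
  simp [lform_single, smul_eq_mul]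

lemma hessian_det (a : Fin 2 → ℝ) (x : Fin 2 → ℝ) :
    Matrix.det (Matrix.of fun i j : Fin 2 =>
      fderiv ℝ (fun z => fderiv ℝ (expf a) z (Pi.single j 1)) x
        (Pi.single i 1)) = 0 := by
  rw [Matrix.det_fin_two]
  simp only [Matrix.of_apply, hessian_entry]
  ring


noncomputable def expC (K : Set (Fin 2 → ℝ)) (a : Fin 2 → ℝ) : C(K, ℝ) :=
  ⟨fun x => expf a x, (contDiff_expf a).continuous.comp continuous_subtype_val⟩

lemma expC_mul (K : Set (Fin 2 → ℝ)) (a b : Fin 2 → ℝ) :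
    expC K a * expC K b = expC K (a + b) := by
  ext x
  simp only [ContinuousMap.mul_apply, expC, ContinuousMap.coe_mk, expf, ← Real.exp_add,
    Pi.add_apply]
  ring_nf

lemma expC_zero (K : Set (Fin 2 → ℝ)) : expC K 0 = 1 := by
  ext x
  simp [expC, expf]

-- the span of the exponentials equals the algebra they generate
lemma adjoin_expC (K : Set (Fin 2 → ℝ)) :
    Subalgebra.toSubmodule (Algebra.adjoin ℝ (Set.range (expC K)))
      = Submodule.span ℝ (Set.range (expC K)) := by
  apply Algebra.adjoin_eq_span_of_subset
  have hM : Submonoid.closure (Set.range (expC K)) ≤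
      ⟨⟨Set.range (expC K), ?_⟩, ?_⟩ := Submonoid.closure_le.mpr le_rfl
  · intro x hx
    exact Submodule.subset_span (hM hx)
  · rintro x y ⟨a, rfl⟩ ⟨b, rfl⟩
    exact ⟨a + b, (expC_mul K a b).symm⟩
  · exact ⟨0, expC_zero K⟩

lemma sep (K : Set (Fin 2 → ℝ)) :
    (Algebra.adjoin ℝ (Set.range (expC K))).SeparatesPoints := by
  intro x y hxy
  obtain ⟨i, hi⟩ : ∃ i, (x : Fin 2 → ℝ) i ≠ (y : Fin 2 → ℝ) i := by
    by_contra h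
    push_neg at h
    exact hxy (Subtype.ext (funext h))
  refine ⟨_, ⟨expC K (Pi.single i 1), Algebra.subset_adjoin ⟨Pi.single i 1, rfl⟩, rfl⟩, ?_⟩
  simp only [expC, ContinuousMap.coe_mk, expf]
  fin_cases i <;>
    simpa [Pi.single_apply, Real.exp_eq_exp] using hi


end Stmt8Aux

open Stmt8Aux

/-- For `S ⊂ ℝ²` bounded open, the span of
`A_det = {v : det(∇²v) = 0 in S}` is dense in `L²(S)`: every `g ∈ L²(S)` is
approximated arbitrarily well in `L²(S)` by finite linear combinations of
functions whose Hessian determinant vanishes on `S`. -/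
theorem stmt8
    (S : Set (Fin 2 → ℝ)) (hSopen : IsOpen S) (hSbdd : Bornology.IsBounded S)
    (g : (Fin 2 → ℝ) → ℝ) (hg : MemLp g 2 (volume.restrict S)) :
    ∀ ε : ℝ, 0 < ε →
      ∃ (n : ℕ) (c : Fin n → ℝ) (v : Fin n → ((Fin 2 → ℝ) → ℝ)),
        (∀ k, ContDiff ℝ 2 (v k) ∧ ∀ x ∈ S,
          Matrix.det (Matrix.of fun i j : Fin 2 =>
            fderiv ℝ (fun z => fderiv ℝ (v k) z (Pi.single j 1)) x
              (Pi.single i 1)) = 0) ∧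
        eLpNorm (fun x => g x - ∑ k, c k * v k x) 2 (volume.restrict S)
          < ENNReal.ofReal ε := by
  intro ε hε
  have hε2 : (0 : ℝ) < ε / 2 := by linarith
  have hvolS : volume S < ⊤ := hSbdd.measure_lt_top
  haveI : IsFiniteMeasure (volume.restrict S) :=
    ⟨by rwa [Measure.restrict_apply_univ]⟩
  -- Step 1: approximate by a bounded continuous function
  obtain ⟨f, hf, -⟩ := hg.exists_boundedContinuous_eLpNorm_sub_le
    (by norm_num : (2 : ENNReal) ≠ ⊤)
    (show ENNReal.ofReal (ε / 2) ≠ 0 by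
      simp [ENNReal.ofReal_eq_zero, not_le, hε2])
  -- Step 2: Stone-Weierstrass on the compact closure
  set K := closure S with hKdef
  have hKcomp : IsCompact K := hSbdd.isCompact_closure
  haveI : CompactSpace K := isCompact_iff_compactSpace.mp hKcomp
  set t : ℝ := (volume S).toReal ^ (2⁻¹ : ℝ) with ht
  have ht0 : 0 ≤ t := Real.rpow_nonneg ENNReal.toReal_nonneg _
  set δ : ℝ := (ε / 2) / (t + 1) with hδdef
  have hδ : 0 < δ := div_pos hε2 (by linarith)
  obtain ⟨p, hp⟩ :=
    ContinuousMap.exists_mem_subalgebra_near_continuous_of_separatesPoints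
      (Algebra.adjoin ℝ (Set.range (expC K))) (sep K)
      (fun x : K => f x) (f.continuous.comp continuous_subtype_val) δ hδ
  -- Step 3: p is a finite linear combination of exponentials
  have hpspan : (p : C(K, ℝ)) ∈ Submodule.span ℝ (Set.range (expC K)) := by
    rw [← adjoin_expC K]
    exact p.2
  obtain ⟨n, cc, gg, hsum⟩ := Submodule.mem_span_set'.mp hpspan
  choose a ha using fun k => (gg k).2
  refine ⟨n, cc, fun k => expf (a k), fun k => ⟨contDiff_expf _, fun x _ => hessian_det _ _⟩, ?_⟩
  -- pointwise identity on K
  have hpx : ∀ (x : Fin 2 → ℝ) (hx : x ∈ K),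
      (p : C(K, ℝ)) ⟨x, hx⟩ = ∑ k, cc k * expf (a k) x := by
    intro x hx
    rw [← hsum]
    have : ∀ k : Fin n, ((gg k : C(K, ℝ)) ⟨x, hx⟩) = expf (a k) x := by
      intro k
      rw [← ha k]
      rfl
    simp only [ContinuousMap.coe_sum, Finset.sum_apply, ContinuousMap.coe_smul, Pi.smul_apply,
      smul_eq_mul]
    exact Finset.sum_congr rfl fun k _ => by rw [this k]
  -- Step 4: error estimates
  have hmeas2 : Continuous fun x : Fin 2 → ℝ => f x - ∑ k, cc k * expf (a k) x :=
    f.continuous.sub (continuous_finset_sum _ fun k _ =>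
      continuous_const.mul (contDiff_expf (a k)).continuous)
  have hbd : ∀ᵐ x ∂(volume.restrict S),
      ‖f x - ∑ k, cc k * expf (a k) x‖ ≤ δ := by
    refine ae_restrict_of_forall_mem hSopen.measurableSet fun x hx => ?_
    have hxK : x ∈ K := subset_closure hx
    have := hp ⟨x, hxK⟩
    rw [hpx x hxK] at this
    rw [show f x - ∑ k, cc k * expf (a k) x
        = -((∑ k, cc k * expf (a k) x) - f x) by ring, norm_neg]
    exact this.le
  have h2le : eLpNorm (fun x => f x - ∑ k, cc k * expf (a k) x) 2 (volume.restrict S)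
      < ENNReal.ofReal (ε / 2) := by
    refine lt_of_le_of_lt (eLpNorm_le_of_ae_bound hbd) ?_
    rw [Measure.restrict_apply_univ]
    have h2t : ((2 : ENNReal).toReal)⁻¹ = (2 : ℝ)⁻¹ := by norm_num
    rw [h2t]
    have hvol' : volume S = ENNReal.ofReal ((volume S).toReal) :=
      (ENNReal.ofReal_toReal hvolS.ne).symm
    rw [hvol', ENNReal.ofReal_rpow_of_nonneg ENNReal.toReal_nonneg (by norm_num : (0:ℝ) ≤ 2⁻¹),
      ← ENNReal.ofReal_mul (Real.rpow_nonneg ENNReal.toReal_nonneg _)]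
    apply ENNReal.ofReal_lt_ofReal_iff hε2 |>.mpr
    rw [← ht, hδdef]
    have h1 : t * ((ε / 2) / (t + 1)) = (ε / 2) * (t / (t + 1)) := by ring
    have h2 : t / (t + 1) < 1 := (div_lt_one (by linarith)).mpr (by linarith)
    nlinarith
  have hmeas1 : AEStronglyMeasurable (fun x => g x - f x) (volume.restrict S) :=
    hg.1.sub f.continuous.aestronglyMeasurable
  have key : (fun x => g x - ∑ k, cc k * expf (a k) x)
      = (fun x => g x - f x) + (fun x => f x - ∑ k, cc k * expf (a k) x) := by
    funext x; simp only [Pi.add_apply]; ring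
  rw [key]
  calc eLpNorm _ 2 (volume.restrict S)
      ≤ eLpNorm (fun x => g x - f x) 2 (volume.restrict S)
        + eLpNorm (fun x => f x - ∑ k, cc k * expf (a k) x) 2 (volume.restrict S) :=
        eLpNorm_add_le hmeas1 hmeas2.aestronglyMeasurable one_le_two
    _ < ENNReal.ofReal (ε / 2) + ENNReal.ofReal (ε / 2) :=
        ENNReal.add_lt_add_of_le_of_lt (hf.trans_lt ENNReal.ofReal_lt_top).ne hf h2le
    _ = ENNReal.ofReal ε := by
        rw [← ENNReal.ofReal_add hε2.le hε2.le]; norm_num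
end

section
/- Let v ∈ W^{2,∞}(S) with ‖∇v‖_∞ ≤ 1/2, and let F = √(Id − ∇v ⊗ ∇v) (matrix square root of the 2×2 matrix Id − ∇v ⊗ ∇v). Then det(F) = √(1 − |∇v|²) ≥ 1/2 pointwise, F ∈ W^{1,∞}(S; ℝ^{2×2}), ‖F‖_∞ ≤ C, and ‖∇F‖_∞ ≤ C‖∇²v‖_∞ ‖∇v‖_∞ for a constant C independent of v. -/
open Matrix

set_option maxHeartbeats 1000000 in
lemma Fm_aux (u : Fin 2 → ℝ) (hs : u 0 ^ 2 + u 1 ^ 2 ≤ 1/4)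
    (F : Matrix (Fin 2) (Fin 2) ℝ)
    (hF : ∀ i j, F i j = (if i = j then (1:ℝ) else 0) -
      u i * u j * (1 + Real.sqrt (1 - (u 0 ^ 2 + u 1 ^ 2)))⁻¹) :
    F.PosSemidef ∧ F * F = 1 - vecMulVec u u ∧
    F.det = Real.sqrt (1 - (u 0 ^ 2 + u 1 ^ 2)) ∧
    1/2 ≤ F.det := by
  have hs0 : (0:ℝ) ≤ u 0 ^ 2 + u 1 ^ 2 := by positivity
  obtain ⟨d, hd0, hd2, hdv⟩ : ∃ d : ℝ, 0 ≤ d ∧ u 0 ^ 2 + u 1 ^ 2 = 1 - d ^ 2 ∧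
      d = Real.sqrt (1 - (u 0 ^ 2 + u 1 ^ 2)) :=
    ⟨_, Real.sqrt_nonneg _, by
      rw [Real.sq_sqrt (by linarith)]; ring, rfl⟩
  have hd1 : (0:ℝ) < 1 + d := by linarith
  obtain ⟨c, hc0, hc1, hF'⟩ : ∃ c : ℝ, 0 < c ∧ c * (1 + d) = 1 ∧
      ∀ i j, F i j = (if i = j then (1:ℝ) else 0) - u i * u j * c := by
    refine ⟨(1 + Real.sqrt (1 - (u 0 ^ 2 + u 1 ^ 2)))⁻¹, ?_, ?_, hF⟩
    · rw [← hdv]; positivity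
    · rw [← hdv]; field_simp
  have hcs : c * (u 0 ^ 2 + u 1 ^ 2) = 1 - d := by
    linear_combination c * hd2 + (1 - d) * hc1
  have hdlow : 1/2 ≤ d := by nlinarith
  have hdet : F.det = d := by
    rw [Matrix.det_fin_two, hF', hF', hF', hF']
    simp
    linear_combination -hcs
  refine ⟨⟨?_, ?_⟩, ?_, hdet.trans hdv, hdet ▸ hdlow⟩
  · ext i j
    rw [Matrix.conjTranspose_apply, hF', hF', star_trivial]
    have : (if j = i then (1:ℝ) else 0) = (if i = j then 1 else 0) := by simp [eq_comm]
    rw [this]; ring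
  · intro x
    have h1 : c * (u 0 ^ 2 + u 1 ^ 2) ≤ 1 := by rw [hcs]; linarith
    rw [Finsupp.sum_fintype _ _ (by simp)]
    simp only [star_trivial, Finsupp.sum_fintype, mul_zero, implies_true, Fin.sum_univ_two, hF']
    norm_num
    nlinarith [mul_nonneg hc0.le (sq_nonneg (u 0 * x 1 - u 1 * x 0)),
      mul_nonneg (by nlinarith : (0:ℝ) ≤ 1 - c * (u 0 ^ 2 + u 1 ^ 2))
        (add_nonneg (sq_nonneg (x 0)) (sq_nonneg (x 1)))]
  · ext i j
    rw [Matrix.mul_apply, Fin.sum_univ_two, Matrix.sub_apply, Matrix.vecMulVec_apply,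
      Matrix.one_apply]
    simp only [hF']
    fin_cases i <;> fin_cases j <;> simp
    · linear_combination (u 0 ^ 2 * c) * hcs - (u 0 ^ 2) * hc1
    · linear_combination (u 0 * u 1 * c) * hcs - (u 0 * u 1) * hc1
    · linear_combination (u 0 * u 1 * c) * hcs - (u 0 * u 1) * hc1
    · linear_combination (u 1 ^ 2 * c) * hcs - (u 1 ^ 2) * hc1

set_option maxHeartbeats 2000000 in
theorem stmt10 :
    ∃ C : ℝ, 0 < C ∧
    ∀ (S : Set (Fin 2 → ℝ)), IsOpen S → Bornology.IsBounded S →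
    ∀ (v : (Fin 2 → ℝ) → ℝ), ContDiff ℝ 2 v →
    ∀ (M₁ M₂ : ℝ),
    (∀ x ∈ S, Real.sqrt (∑ i, (fderiv ℝ v x (Pi.single i 1))^2) ≤ M₁) →
    M₁ ≤ 1/2 →
    (∀ x ∈ S, ∀ i j : Fin 2,
      |fderiv ℝ (fun z => fderiv ℝ v z (Pi.single j 1)) x (Pi.single i 1)| ≤ M₂) →
    ∀ (G : (Fin 2 → ℝ) → Matrix (Fin 2) (Fin 2) ℝ),
    (∀ x ∈ S, (G x).PosSemidef ∧
      G x * G x = 1 - vecMulVec (fun i => fderiv ℝ v x (Pi.single i 1))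
        (fun i => fderiv ℝ v x (Pi.single i 1))) →
    ∀ x ∈ S,
      (G x).det = Real.sqrt (1 - ∑ i, (fderiv ℝ v x (Pi.single i 1))^2) ∧
      1/2 ≤ (G x).det ∧
      (∀ i j : Fin 2, |G x i j| ≤ C) ∧
      (∀ i j : Fin 2, DifferentiableAt ℝ (fun z => G z i j) x ∧
        ‖fderiv ℝ (fun z => G z i j) x‖ ≤ C * M₂ * M₁) := by
  refine ⟨10, by norm_num, ?_⟩
  intro S hS _hSb v hv M₁ M₂ hM₁ hM₁half hM₂ G hG x hx
  -- the explicit square root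
  set F : (Fin 2 → ℝ) → Matrix (Fin 2) (Fin 2) ℝ := fun z => Matrix.of fun i j =>
    (if i = j then (1:ℝ) else 0) -
      fderiv ℝ v z (Pi.single i 1) * fderiv ℝ v z (Pi.single j 1) *
      (1 + Real.sqrt (1 - ((fderiv ℝ v z (Pi.single 0 1)) ^ 2 +
        (fderiv ℝ v z (Pi.single 1 1)) ^ 2)))⁻¹ with hFdef
  have hM₁0 : 0 ≤ M₁ := le_trans (Real.sqrt_nonneg _) (hM₁ x hx)
  have hM₂0 : 0 ≤ M₂ := le_trans (abs_nonneg _) (hM₂ x hx 0 0)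
  have hsmall : ∀ y ∈ S,
      (fderiv ℝ v y (Pi.single 0 1)) ^ 2 + (fderiv ℝ v y (Pi.single 1 1)) ^ 2 ≤ 1/4 := by
    intro y hy
    have h := hM₁ y hy
    rw [Fin.sum_univ_two] at h
    have hnn : (0:ℝ) ≤ (fderiv ℝ v y (Pi.single 0 1)) ^ 2 + (fderiv ℝ v y (Pi.single 1 1)) ^ 2 := by
      positivity
    nlinarith [Real.sq_sqrt hnn, Real.sqrt_nonneg
      ((fderiv ℝ v y (Pi.single 0 1)) ^ 2 + (fderiv ℝ v y (Pi.single 1 1)) ^ 2)]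
  have hGF : ∀ y ∈ S, G y = F y := by
    intro y hy
    obtain ⟨hpsd, hsq⟩ := hG y hy
    obtain ⟨hFpsd, hFsq, -, -⟩ := Fm_aux (fun i => fderiv ℝ v y (Pi.single i 1))
      (hsmall y hy) (F y) (fun i j => rfl)
    exact (by open scoped MatrixOrder in exact (CFC.sqrt_mul_self (G y) hpsd.nonneg).symm.trans ((congrArg CFC.sqrt (hsq.trans hFsq.symm)).trans (CFC.sqrt_mul_self (F y) hFpsd.nonneg)))
  obtain ⟨-, -, hdet, hdetlow⟩ := Fm_aux (fun i => fderiv ℝ v x (Pi.single i 1))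
    (hsmall x hx) (F x) (fun i j => rfl)
  -- pointwise bounds on the gradient components at x
  have hub : ∀ k : Fin 2, |fderiv ℝ v x (Pi.single k 1)| ≤ M₁ := by
    have h := hM₁ x hx
    rw [Fin.sum_univ_two] at h
    have key : ∀ k : Fin 2, (fderiv ℝ v x (Pi.single k 1))^2 ≤
        (fderiv ℝ v x (Pi.single 0 1)) ^ 2 + (fderiv ℝ v x (Pi.single 1 1)) ^ 2 := by
      intro k
      fin_cases k
      · exact le_add_of_nonneg_right (sq_nonneg _)
      · exact le_add_of_nonneg_left (sq_nonneg _)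
    intro k
    refine le_trans ?_ h
    rw [← Real.sqrt_sq_eq_abs]
    exact Real.sqrt_le_sqrt (key k)
  have hubhalf : ∀ k : Fin 2, |fderiv ℝ v x (Pi.single k 1)| ≤ 1/2 :=
    fun k => le_trans (hub k) hM₁half
  -- sqrt lower bound at x
  have hsx := hsmall x hx
  have hsqrtlb : (4:ℝ)/5 ≤ Real.sqrt (1 - ((fderiv ℝ v x (Pi.single 0 1)) ^ 2 +
      (fderiv ℝ v x (Pi.single 1 1)) ^ 2)) := by
    rw [show (4:ℝ)/5 = Real.sqrt ((4/5)^2) by rw [Real.sqrt_sq]; norm_num]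
    apply Real.sqrt_le_sqrt; nlinarith
  have hsqrtub : Real.sqrt (1 - ((fderiv ℝ v x (Pi.single 0 1)) ^ 2 +
      (fderiv ℝ v x (Pi.single 1 1)) ^ 2)) ≤ 1 := by
    rw [Real.sqrt_le_one]
    nlinarith [sq_nonneg (fderiv ℝ v x (Pi.single 0 1)),
      sq_nonneg (fderiv ℝ v x (Pi.single 1 1))]
  refine ⟨?_, ?_, ?_, ?_⟩
  · rw [hGF x hx, Fin.sum_univ_two]; exact hdet
  · rw [hGF x hx]; exact hdetlow
  · -- entry bounds
    intro i j
    rw [hGF x hx]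
    have hc0 : (0:ℝ) < (1 + Real.sqrt (1 - ((fderiv ℝ v x (Pi.single 0 1)) ^ 2 +
        (fderiv ℝ v x (Pi.single 1 1)) ^ 2)))⁻¹ := by positivity
    have hc1 : (1 + Real.sqrt (1 - ((fderiv ℝ v x (Pi.single 0 1)) ^ 2 +
        (fderiv ℝ v x (Pi.single 1 1)) ^ 2)))⁻¹ ≤ 1 := by
      rw [inv_le_one_iff₀]; right; linarith [Real.sqrt_nonneg (1 - ((fderiv ℝ v x (Pi.single 0 1)) ^ 2 +
        (fderiv ℝ v x (Pi.single 1 1)) ^ 2))]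
    show |(if i = j then (1:ℝ) else 0) - _| ≤ 10
    have htri : ∀ a b : ℝ, |a - b| ≤ |a| + |b| := fun a b => by
      rw [sub_eq_add_neg]
      exact (abs_add_le _ _).trans (by rw [abs_neg])
    refine (htri _ _).trans ?_
    have hprod : |fderiv ℝ v x (Pi.single i 1) * fderiv ℝ v x (Pi.single j 1) *
        (1 + Real.sqrt (1 - ((fderiv ℝ v x (Pi.single 0 1)) ^ 2 +
          (fderiv ℝ v x (Pi.single 1 1)) ^ 2)))⁻¹| ≤ 1 := by
      rw [abs_mul, abs_mul]
      have hcabs : |(1 + Real.sqrt (1 - ((fderiv ℝ v x (Pi.single 0 1)) ^ 2 +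
          (fderiv ℝ v x (Pi.single 1 1)) ^ 2)))⁻¹| ≤ 1 := by
        rw [abs_of_pos hc0]; exact hc1
      calc |fderiv ℝ v x (Pi.single i 1)| * |fderiv ℝ v x (Pi.single j 1)| *
            |(1 + Real.sqrt (1 - ((fderiv ℝ v x (Pi.single 0 1)) ^ 2 +
              (fderiv ℝ v x (Pi.single 1 1)) ^ 2)))⁻¹|
          ≤ (1/2) * (1/2) * 1 :=
            mul_le_mul (mul_le_mul (hubhalf i) (hubhalf j) (abs_nonneg _) (by norm_num))
              hcabs (abs_nonneg _) (by norm_num)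
        _ ≤ 1 := by norm_num
    have hdelta : |if i = j then (1:ℝ) else 0| ≤ 1 := by
      rcases eq_or_ne i j with rfl | hij
      · simp
      · simp [hij]
    linarith
  · -- calculus
    intro i j
    have hφ : ContDiff ℝ 1 (fderiv ℝ v) := hv.fderiv_right (by norm_num)
    have hwd : ∀ (k : Fin 2) (z : Fin 2 → ℝ),
        DifferentiableAt ℝ (fun y => fderiv ℝ v y (Pi.single k 1)) z :=
      fun k z => ((hφ.differentiable one_ne_zero).differentiableAt).clm_apply (differentiableAt_const _)
    have hwD : ∀ k : Fin 2, HasFDerivAt (fun y => fderiv ℝ v y (Pi.single k 1))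
        (fderiv ℝ (fun y => fderiv ℝ v y (Pi.single k 1)) x) x :=
      fun k => (hwd k x).hasFDerivAt
    set D : Fin 2 → (Fin 2 → ℝ) →L[ℝ] ℝ :=
      fun k => fderiv ℝ (fun y => fderiv ℝ v y (Pi.single k 1)) x with hDdef
    have hDb : ∀ k : Fin 2, ‖D k‖ ≤ 2 * M₂ := by
      intro k
      refine ContinuousLinearMap.opNorm_le_bound _ (by linarith) (fun y => ?_)
      have hy : y = y 0 • (Pi.single 0 1 : Fin 2 → ℝ) + y 1 • (Pi.single 1 1 : Fin 2 → ℝ) := by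
        funext m; fin_cases m <;> simp
      have hDy : D k y = y 0 • D k (Pi.single 0 1) + y 1 • D k (Pi.single 1 1) := by
        conv_lhs => rw [hy]
        exact (D k).map_add _ _ |>.trans (by rw [(D k).map_smul, (D k).map_smul])
      rw [hDy]
      have e0 := hM₂ x hx 0 k
      have e1 := hM₂ x hx 1 k
      have n0 : ‖y 0‖ ≤ ‖y‖ := norm_le_pi_norm y 0
      have n1 : ‖y 1‖ ≤ ‖y‖ := norm_le_pi_norm y 1
      calc ‖y 0 • D k (Pi.single 0 1) + y 1 • D k (Pi.single 1 1)‖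
          ≤ ‖y 0 • D k (Pi.single 0 1)‖ + ‖y 1 • D k (Pi.single 1 1)‖ := norm_add_le _ _
        _ = ‖y 0‖ * ‖D k (Pi.single 0 1)‖ + ‖y 1‖ * ‖D k (Pi.single 1 1)‖ := by
            rw [norm_smul, norm_smul]
        _ ≤ ‖y‖ * M₂ + ‖y‖ * M₂ := by
            have a0 : ‖D k (Pi.single 0 1)‖ ≤ M₂ := e0
            have a1 : ‖D k (Pi.single 1 1)‖ ≤ M₂ := e1
            exact add_le_add (mul_le_mul n0 a0 (norm_nonneg _) (norm_nonneg _))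
              (mul_le_mul n1 a1 (norm_nonneg _) (norm_nonneg _))
        _ = 2 * M₂ * ‖y‖ := by ring
    set wa := fderiv ℝ v x (Pi.single 0 1) with hwa
    set wb := fderiv ℝ v x (Pi.single 1 1) with hwb
    have hsx' : wa ^ 2 + wb ^ 2 ≤ 1/4 := hsx
    set sd := Real.sqrt (1 - (wa ^ 2 + wb ^ 2)) with hsd
    have hsdlb : (4:ℝ)/5 ≤ sd := hsqrtlb
    have hsdub : sd ≤ 1 := hsqrtub
    have hsd0 : (0:ℝ) < sd := lt_of_lt_of_le (by norm_num) hsdlb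
    have hne : (1:ℝ) - (wa ^ 2 + wb ^ 2) ≠ 0 := by nlinarith
    have hinvne : (1:ℝ) + sd ≠ 0 := by positivity
    set E1 : (Fin 2 → ℝ) →L[ℝ] ℝ := (wa • D 0 + wa • D 0) + (wb • D 1 + wb • D 1) with hE1
    have h1 : HasFDerivAt (fun z => fderiv ℝ v z (Pi.single 0 1) ^ 2 +
        fderiv ℝ v z (Pi.single 1 1) ^ 2) E1 x := by
      simp only [pow_two]; exact ((hwD 0).mul (hwD 0)).add ((hwD 1).mul (hwD 1))
    have h2 : HasFDerivAt (fun z => (1:ℝ) - (fderiv ℝ v z (Pi.single 0 1) ^ 2 +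
        fderiv ℝ v z (Pi.single 1 1) ^ 2)) (0 - E1) x := (hasFDerivAt_const 1 x).sub h1
    have h3 : HasFDerivAt (fun z => Real.sqrt ((1:ℝ) - (fderiv ℝ v z (Pi.single 0 1) ^ 2 +
        fderiv ℝ v z (Pi.single 1 1) ^ 2))) ((1 / (2 * sd)) • (0 - E1)) x := h2.sqrt hne
    have h4 : HasFDerivAt (fun z => (1:ℝ) + Real.sqrt ((1:ℝ) -
        (fderiv ℝ v z (Pi.single 0 1) ^ 2 + fderiv ℝ v z (Pi.single 1 1) ^ 2)))
        (0 + (1 / (2 * sd)) • (0 - E1)) x := (hasFDerivAt_const 1 x).add h3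
    have h5 : HasFDerivAt (fun z => ((1:ℝ) + Real.sqrt ((1:ℝ) -
        (fderiv ℝ v z (Pi.single 0 1) ^ 2 + fderiv ℝ v z (Pi.single 1 1) ^ 2)))⁻¹)
        ((-((1 + sd) ^ 2)⁻¹) • (0 + (1 / (2 * sd)) • (0 - E1))) x :=
      (hasDerivAt_inv hinvne).comp_hasFDerivAt x h4
    have h6 : HasFDerivAt (fun z => fderiv ℝ v z (Pi.single i 1) * fderiv ℝ v z (Pi.single j 1))
        ((fderiv ℝ v x (Pi.single i 1)) • D j + (fderiv ℝ v x (Pi.single j 1)) • D i) x :=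
      (hwD i).mul (hwD j)
    have h7 := h6.mul h5
    have h8 := (hasFDerivAt_const (if i = j then (1:ℝ) else 0) x).sub h7
    have hentry : HasFDerivAt (fun z => F z i j)
        (0 - ((fderiv ℝ v x (Pi.single i 1) * fderiv ℝ v x (Pi.single j 1)) •
            ((-((1 + sd) ^ 2)⁻¹) • (0 + (1 / (2 * sd)) • (0 - E1))) +
          ((1 + sd)⁻¹) • ((fderiv ℝ v x (Pi.single i 1)) • D j +
            (fderiv ℝ v x (Pi.single j 1)) • D i))) x := h8
    have hev : (fun z => G z i j) =ᶠ[nhds x] (fun z => F z i j) :=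
      Filter.eventuallyEq_of_mem (hS.mem_nhds hx) (fun z hz => by rw [hGF z hz])
    refine ⟨hentry.differentiableAt.congr_of_eventuallyEq hev, ?_⟩
    rw [hev.fderiv_eq, hentry.fderiv]
    -- numeric bound
    have hMM : (0:ℝ) ≤ M₂ * M₁ := mul_nonneg hM₂0 hM₁0
    have ebnd : ∀ (k m : Fin 2), ‖(fderiv ℝ v x (Pi.single k 1)) • D m‖ ≤ 2 * (M₂ * M₁) := by
      intro k m
      refine le_trans (ContinuousLinearMap.opNorm_smul_le _ _) ?_
      rw [Real.norm_eq_abs]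
      calc |fderiv ℝ v x (Pi.single k 1)| * ‖D m‖ ≤ M₁ * (2 * M₂) :=
            mul_le_mul (hub k) (hDb m) (norm_nonneg _) hM₁0
        _ = 2 * (M₂ * M₁) := by ring
    have nE1 : ‖E1‖ ≤ 8 * (M₂ * M₁) := by
      rw [hE1]
      calc ‖(wa • D 0 + wa • D 0) + (wb • D 1 + wb • D 1)‖
          ≤ (‖wa • D 0‖ + ‖wa • D 0‖) + (‖wb • D 1‖ + ‖wb • D 1‖) :=
            le_trans (norm_add_le _ _) (add_le_add (norm_add_le _ _) (norm_add_le _ _))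
        _ ≤ (2 * (M₂ * M₁) + 2 * (M₂ * M₁)) + (2 * (M₂ * M₁) + 2 * (M₂ * M₁)) := by
            have e0 := ebnd 0 0
            have e1 := ebnd 1 1
            exact add_le_add (add_le_add e0 e0) (add_le_add e1 e1)
        _ = 8 * (M₂ * M₁) := by ring
    have n2 : ‖(0:(Fin 2 → ℝ) →L[ℝ] ℝ) - E1‖ ≤ 8 * (M₂ * M₁) := by
      rw [zero_sub, norm_neg]; exact nE1
    have n3 : ‖(1 / (2 * sd)) • ((0:(Fin 2 → ℝ) →L[ℝ] ℝ) - E1)‖ ≤ 5 * (M₂ * M₁) := by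
      refine le_trans (ContinuousLinearMap.opNorm_smul_le _ _) ?_
      rw [Real.norm_eq_abs, abs_of_pos (by positivity)]
      have hco : 1 / (2 * sd) ≤ 5/8 := by
        rw [div_le_div_iff₀ (by positivity) (by norm_num)]; linarith
      calc 1 / (2 * sd) * ‖(0:(Fin 2 → ℝ) →L[ℝ] ℝ) - E1‖ ≤ (5/8) * (8 * (M₂ * M₁)) :=
            mul_le_mul hco n2 (norm_nonneg _) (by norm_num)
        _ = 5 * (M₂ * M₁) := by ring
    have n4 : ‖(0:(Fin 2 → ℝ) →L[ℝ] ℝ) + (1 / (2 * sd)) • (0 - E1)‖ ≤ 5 * (M₂ * M₁) := by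
      rw [zero_add]; exact n3
    have n5 : ‖(-((1 + sd) ^ 2)⁻¹) • ((0:(Fin 2 → ℝ) →L[ℝ] ℝ) +
        (1 / (2 * sd)) • (0 - E1))‖ ≤ 5 * (M₂ * M₁) := by
      refine le_trans (ContinuousLinearMap.opNorm_smul_le _ _) ?_
      rw [Real.norm_eq_abs, abs_neg, abs_inv, abs_of_nonneg (by positivity)]
      have hco : ((1 + sd) ^ 2)⁻¹ ≤ 1 := by
        rw [inv_le_one_iff₀]; right; nlinarith
      calc ((1 + sd) ^ 2)⁻¹ * ‖(0:(Fin 2 → ℝ) →L[ℝ] ℝ) + (1 / (2 * sd)) • (0 - E1)‖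
          ≤ 1 * (5 * (M₂ * M₁)) := mul_le_mul hco n4 (norm_nonneg _) (by norm_num)
        _ = 5 * (M₂ * M₁) := by ring
    have n6 : ‖(fderiv ℝ v x (Pi.single i 1) * fderiv ℝ v x (Pi.single j 1)) •
        ((-((1 + sd) ^ 2)⁻¹) • ((0:(Fin 2 → ℝ) →L[ℝ] ℝ) + (1 / (2 * sd)) • (0 - E1)))‖
        ≤ 2 * (M₂ * M₁) := by
      refine le_trans (ContinuousLinearMap.opNorm_smul_le _ _) ?_
      rw [Real.norm_eq_abs, abs_mul]
      have hq : |fderiv ℝ v x (Pi.single i 1)| * |fderiv ℝ v x (Pi.single j 1)| ≤ 1/4 := by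
        calc |fderiv ℝ v x (Pi.single i 1)| * |fderiv ℝ v x (Pi.single j 1)|
            ≤ (1/2) * (1/2) := mul_le_mul (hubhalf i) (hubhalf j) (abs_nonneg _) (by norm_num)
          _ = 1/4 := by norm_num
      calc |fderiv ℝ v x (Pi.single i 1)| * |fderiv ℝ v x (Pi.single j 1)| *
            ‖(-((1 + sd) ^ 2)⁻¹) • ((0:(Fin 2 → ℝ) →L[ℝ] ℝ) + (1 / (2 * sd)) • (0 - E1))‖
          ≤ (1/4) * (5 * (M₂ * M₁)) := mul_le_mul hq n5 (norm_nonneg _) (by norm_num)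
        _ ≤ 2 * (M₂ * M₁) := by nlinarith
    have n7 : ‖((1 + sd)⁻¹) • ((fderiv ℝ v x (Pi.single i 1)) • D j +
        (fderiv ℝ v x (Pi.single j 1)) • D i)‖ ≤ 4 * (M₂ * M₁) := by
      refine le_trans (ContinuousLinearMap.opNorm_smul_le _ _) ?_
      rw [Real.norm_eq_abs, abs_inv, abs_of_nonneg (by positivity)]
      have hco : ((1:ℝ) + sd)⁻¹ ≤ 1 := by
        rw [inv_le_one_iff₀]; right; linarith
      have hin : ‖(fderiv ℝ v x (Pi.single i 1)) • D j +
          (fderiv ℝ v x (Pi.single j 1)) • D i‖ ≤ 4 * (M₂ * M₁) := by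
        calc ‖(fderiv ℝ v x (Pi.single i 1)) • D j + (fderiv ℝ v x (Pi.single j 1)) • D i‖
            ≤ ‖(fderiv ℝ v x (Pi.single i 1)) • D j‖ + ‖(fderiv ℝ v x (Pi.single j 1)) • D i‖ :=
              norm_add_le _ _
          _ ≤ 2 * (M₂ * M₁) + 2 * (M₂ * M₁) := add_le_add (ebnd i j) (ebnd j i)
          _ = 4 * (M₂ * M₁) := by ring
      calc (1 + sd)⁻¹ * ‖(fderiv ℝ v x (Pi.single i 1)) • D j +
            (fderiv ℝ v x (Pi.single j 1)) • D i‖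
          ≤ 1 * (4 * (M₂ * M₁)) := mul_le_mul hco hin (norm_nonneg _) (by norm_num)
        _ = 4 * (M₂ * M₁) := by ring
    rw [zero_sub, norm_neg]
    refine le_trans (norm_add_le _ _) ?_
    calc ‖(fderiv ℝ v x (Pi.single i 1) * fderiv ℝ v x (Pi.single j 1)) •
            ((-((1 + sd) ^ 2)⁻¹) • ((0:(Fin 2 → ℝ) →L[ℝ] ℝ) + (1 / (2 * sd)) • (0 - E1)))‖ +
          ‖((1 + sd)⁻¹) • ((fderiv ℝ v x (Pi.single i 1)) • D j +
            (fderiv ℝ v x (Pi.single j 1)) • D i)‖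
        ≤ 2 * (M₂ * M₁) + 4 * (M₂ * M₁) := add_le_add n6 n7
      _ ≤ 10 * M₂ * M₁ := by nlinarith
end

section
/- Let a > 0, b ≥ 0, c ∈ ℝ with ab = c². For a skew-symmetric 3×3 matrix W with W₂₃ = (c/a)W₁₃ (i.e., W ∈ N_R), define K(W) = −(W₁₂² + W₁₃²)a − 2b W₁₃² − b W₁₂² − (b²/a)W₁₃², let Λ = (λ₁, λ₂) solve MΛ = B with M = [[a,c],[c,b]] and B = W₁₃(a+b, c(1+b/a)). Then the minimum value J_min = ½ΛᵀMΛ − B·Λ − K(W), evaluated with λ₁ = −(c/a)λ₂ + W₁₃(1+b/a), equals W₁₂²(a+b) + W₁₃² (a+b)²/(2a). In particular, if a + b > 0 and J_min = 0, then W₁₂ = W₁₃ = 0, i.e., W = 0. -/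
/-- With `a > 0`, `b ≥ 0`, `ab = c²`, `W₂₃ = (c/a)W₁₃`, and the
stationarity relation `λ₁ = −(c/a)λ₂ + W₁₃(1+b/a)`, the minimum value
`J_min = ½ΛᵀMΛ − B·Λ − K(W)` equals `W₁₂²(a+b) + W₁₃²(a+b)²/(2a)`; hence if
`a + b > 0` and `J_min = 0` then `W₁₂ = W₁₃ = 0`, i.e. `W = 0`. -/
theorem stmt14 (a b c W12 W13 lam2 : ℝ)
    (ha : 0 < a) (hb : 0 ≤ b) (habc : a * b = c^2)
    (lam1 : ℝ) (hlam1 : lam1 = -(c/a) * lam2 + W13 * (1 + b/a))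
    (K : ℝ) (hK : K = -(W12^2 + W13^2) * a - 2*b*W13^2 - b*W12^2 - (b^2/a)*W13^2)
    (Jmin : ℝ)
    (hJ : Jmin = (1/2) * (a*lam1^2 + 2*c*lam1*lam2 + b*lam2^2)
        - W13 * ((a+b)*lam1 + c*(1+b/a)*lam2) - K) :
    Jmin = W12^2 * (a+b) + W13^2 * (a+b)^2 / (2*a) ∧
    (0 < a + b → Jmin = 0 → W12 = 0 ∧ W13 = 0) := by
  have ha' : a ≠ 0 := ne_of_gt ha
  have hmain : Jmin = W12^2 * (a+b) + W13^2 * (a+b)^2 / (2*a) := by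
    subst hlam1 hK hJ
    have hc : c^2 = a*b := habc.symm
    field_simp
    ring_nf
    linear_combination (lam2^2) * habc
  refine ⟨hmain, fun hab h0 => ?_⟩
  rw [hmain] at h0
  have h1 : W12^2 * (a+b) ≥ 0 := by positivity
  have h2 : W13^2 * (a+b)^2 / (2*a) ≥ 0 := by positivity
  have e1 : W12^2 * (a+b) = 0 := le_antisymm (by linarith) h1
  have e2 : W13^2 * (a+b)^2 / (2*a) = 0 := le_antisymm (by linarith) h2
  have w12 : W12 = 0 := by
    have := mul_eq_zero.mp e1
    rcases this with h | h
    · exact pow_eq_zero_iff (n:=2) (by norm_num) |>.mp h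
    · linarith
  have w13 : W13 = 0 := by
    have h3 : W13^2 * (a+b)^2 = 0 := by
      field_simp at e2; linarith
    rcases mul_eq_zero.mp h3 with h | h
    · exact pow_eq_zero_iff (n:=2) (by norm_num) |>.mp h
    · nlinarith
  exact ⟨w12, w13⟩
end
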